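/- Define Q_k = (k log(k+e))^k/k!, Q_0 = 1. Then for every non-quasianalytic weight sequence L, there exists ρ > 0 with Q_k ≤ ρ^k L_k for all k; equivalently F^Q ⊆ F^L, i.e., F^Q is contained in the intersection of F^L over all non-quasianalytic weight sequences L. -/

import Mathlib

lemma aux1 (k : ℕ) : (k:ℝ)^k ≤ (Real.exp 1)^k * (k.factorial : ℝ) := by
  induction k with
  | zero => simp
  | succ n ih =>
    rcases Nat.eq_zero_or_pos n with h | h
    · subst h
      have h1 : (1:ℝ) ≤ Real.exp 1 := by
        have := Real.add_one_le_exp (1:ℝ); linarith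
      simpa using h1
    · have hn : (0:ℝ) < n := by exact_mod_cast h
      have h1 : ((n:ℝ)+1)^n ≤ Real.exp 1 * (n:ℝ)^n := by
        have heq : (n:ℝ)+1 = (n:ℝ) * (1 + 1/n) := by field_simp
        rw [heq, mul_pow]
        have h2 : (1 + 1/(n:ℝ)) ≤ Real.exp (1/n) := by
          have := Real.add_one_le_exp (1/(n:ℝ)); linarith
        have h3 : (1 + 1/(n:ℝ))^n ≤ (Real.exp (1/n))^n :=
          pow_le_pow_left₀ (by positivity) h2 n
        have h4 : (Real.exp (1/(n:ℝ)))^n = Real.exp 1 := by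
          rw [← Real.exp_nat_mul]
          congr 1
          field_simp
        rw [h4] at h3
        calc ((n:ℝ))^n * (1+1/(n:ℝ))^n ≤ (n:ℝ)^n * Real.exp 1 :=
              mul_le_mul_of_nonneg_left h3 (by positivity)
          _ = Real.exp 1 * (n:ℝ)^n := by ring
      have hcast : ((n+1 : ℕ):ℝ) = (n:ℝ)+1 := by push_cast; ring
      rw [hcast]
      calc ((n:ℝ)+1)^(n+1) = ((n:ℝ)+1)^n * ((n:ℝ)+1) := by ring
        _ ≤ (Real.exp 1 * (n:ℝ)^n) * ((n:ℝ)+1) := by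
            apply mul_le_mul_of_nonneg_right h1 (by positivity)
        _ ≤ (Real.exp 1 * ((Real.exp 1)^n * (n.factorial:ℝ))) * ((n:ℝ)+1) := by
            have := mul_le_mul_of_nonneg_left ih (le_of_lt (Real.exp_pos 1))
            apply mul_le_mul_of_nonneg_right this (by positivity)
        _ = (Real.exp 1)^(n+1) * (((n:ℝ)+1) * (n.factorial:ℝ)) := by ring
        _ = (Real.exp 1)^(n+1) * ((n+1).factorial : ℝ) := by
            rw [Nat.factorial_succ]; push_cast; ring

lemma aux2 (m : ℕ) : ∏ j ∈ Finset.Ico 1 (m+1), ((j:ℝ)+2) = ((m+2).factorial : ℝ)/2 := by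
  induction m with
  | zero => simp [Nat.factorial]
  | succ n ih =>
    rw [Finset.prod_Ico_succ_top (by omega), ih]
    have h : ((n+1)+2).factorial = ((n+1)+2) * ((n+2).factorial) := by
      rw [show (n+1)+2 = (n+2)+1 from rfl, Nat.factorial_succ]
    rw [h]
    push_cast
    ring

lemma aux3 (n : ℕ) : Real.log ((n:ℝ)+2) ≤ ∑ j ∈ Finset.Icc 1 (n+1), (1:ℝ)/j := by
  induction n with
  | zero =>
    simp only [Nat.cast_zero, zero_add]
    have : Real.log 2 ≤ 1 := by
      have := Real.log_le_sub_one_of_pos (by norm_num : (0:ℝ) < 2); linarith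
    simpa using this
  | succ n ih =>
    rw [Finset.sum_Icc_succ_top (by omega)]
    have h1 : Real.log (((n:ℝ)+3)/((n:ℝ)+2)) ≤ 1/((n:ℝ)+2) := by
      have h0 := Real.log_le_sub_one_of_pos
        (show (0:ℝ) < ((n:ℝ)+3)/((n:ℝ)+2) by positivity)
      have h2 : ((n:ℝ)+3)/((n:ℝ)+2) - 1 = 1/((n:ℝ)+2) := by
        field_simp
        ring
      linarith
    have h3 : Real.log ((n:ℝ)+3) = Real.log ((n:ℝ)+2) + Real.log (((n:ℝ)+3)/((n:ℝ)+2)) := by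
      rw [Real.log_div (by positivity) (by positivity)]; ring
    push_cast
    have h4 : (n:ℝ)+1+2 = (n:ℝ)+3 := by ring
    have h5 : (n:ℝ)+1+1 = (n:ℝ)+2 := by ring
    rw [h4, h5]
    linarith

set_option maxHeartbeats 2000000 in
theorem stmt15 (Q : ℕ → ℝ) (hQ0 : Q 0 = 1)
    (hQ : ∀ k : ℕ, 1 ≤ k →
      Q k = ((k : ℝ) * Real.log ((k : ℝ) + Real.exp 1)) ^ k / (k.factorial : ℝ)) :
    ∀ L : ℕ → ℝ, (∀ k, 0 < L k) → L 0 = 1 → 1 ≤ L 1 →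
      (∀ k, 1 ≤ k → (L k) ^ 2 ≤ L (k - 1) * L (k + 1)) →
      (Summable fun k : ℕ => 1 / (((k.factorial : ℝ) * L k) ^ ((1 : ℝ) / k))) →
      ∃ ρ : ℝ, 0 < ρ ∧ ∀ k, Q k ≤ ρ ^ k * L k := by
  intro L hLpos hL0 hL1 hconv hsum
  have e2 : (2:ℝ) ≤ Real.exp 1 := by
    have := Real.add_one_le_exp (1:ℝ); linarith
  have e3 : Real.exp 1 ≤ 3 := by
    have := Real.exp_one_lt_d9; linarith
  set lam : ℕ → ℝ := fun j => L (j+1) / L j with hlam_def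
  have hlam_pos : ∀ j, 0 < lam j := fun j => div_pos (hLpos _) (hLpos _)
  have hlam_mono : Monotone lam := by
    apply monotone_nat_of_le_succ
    intro j
    have h := hconv (j+1) (by omega)
    simp only [Nat.add_sub_cancel] at h
    show L (j+1) / L j ≤ L (j+2) / L (j+1)
    rw [div_le_div_iff₀ (hLpos j) (hLpos (j+1))]
    nlinarith [h, hLpos j, hLpos (j+1), hLpos (j+2)]
  have hlam_one : ∀ j, 1 ≤ lam j := by
    intro j
    have h0 : (1:ℝ) ≤ lam 0 := by
      show (1:ℝ) ≤ L 1 / L 0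
      rw [hL0, div_one]; exact hL1
    exact le_trans h0 (hlam_mono (Nat.zero_le j))
  have hLprod : ∀ k, L k = ∏ j ∈ Finset.range k, lam j := by
    intro k
    induction k with
    | zero => simp [hL0]
    | succ n ih =>
      rw [Finset.prod_range_succ, ← ih]
      show L (n+1) = L n * (L (n+1) / L n)
      rw [mul_comm]
      exact (div_mul_cancel₀ _ (hLpos n).ne').symm
  set S : ℝ := ∑' (k : ℕ), 1 / (((k.factorial : ℝ) * L k) ^ ((1 : ℝ) / k)) with hS_def
  have hterm_nonneg : ∀ i : ℕ, 0 ≤ 1 / (((i.factorial : ℝ) * L i) ^ ((1 : ℝ) / i)) := by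
    intro i
    have hf : (0:ℝ) ≤ (i.factorial : ℝ) * L i :=
      mul_pos (by exact_mod_cast i.factorial_pos) (hLpos i) |>.le
    exact div_nonneg zero_le_one (Real.rpow_nonneg hf _)
  have hlamS : ∀ n : ℕ, Real.log ((n:ℝ)+2) ≤ S * lam n := by
    intro n
    have hcomp : ∀ j ∈ Finset.Icc 1 (n+1),
        (1:ℝ)/j ≤ lam n * (1 / (((j.factorial : ℝ) * L j) ^ ((1 : ℝ) / j))) := by
      intro j hj
      rw [Finset.mem_Icc] at hj
      obtain ⟨hj1, hj2⟩ := hj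
      have hjpos : (0:ℝ) < j := by exact_mod_cast hj1
      have hLj : L j ≤ (lam (j-1))^j := by
        rw [hLprod j]
        calc ∏ i ∈ Finset.range j, lam i ≤ ∏ i ∈ Finset.range j, lam (j-1) := by
              apply Finset.prod_le_prod
              · intro i _; exact (hlam_pos i).le
              · intro i hi
                rw [Finset.mem_range] at hi
                exact hlam_mono (by omega)
          _ = (lam (j-1))^j := by rw [Finset.prod_const, Finset.card_range]
      have hfact : (j.factorial : ℝ) ≤ (j:ℝ)^j := by
        exact_mod_cast Nat.factorial_le_pow j
      have hmulpos : (0:ℝ) < (j.factorial : ℝ) * L j :=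
        mul_pos (by exact_mod_cast j.factorial_pos) (hLpos j)
      have hjlam : (0:ℝ) < (j:ℝ) * lam (j-1) := mul_pos hjpos (hlam_pos _)
      have hbase : (j.factorial : ℝ) * L j ≤ ((j:ℝ) * lam (j-1))^j := by
        rw [mul_pow]
        exact mul_le_mul hfact hLj (hLpos j).le (pow_nonneg hjpos.le j)

      have hrpow : ((j.factorial : ℝ) * L j) ^ ((1 : ℝ) / j) ≤ (j:ℝ) * lam (j-1) := by
        rw [one_div]
        calc ((j.factorial : ℝ) * L j) ^ ((j:ℝ)⁻¹)
            ≤ (((j:ℝ) * lam (j-1))^j) ^ ((j:ℝ)⁻¹) :=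
              Real.rpow_le_rpow hmulpos.le hbase (by positivity)
          _ = (j:ℝ) * lam (j-1) :=
              Real.pow_rpow_inv_natCast hjlam.le (by omega)
      have hle2 : ((j.factorial : ℝ) * L j) ^ ((1 : ℝ) / j) ≤ (j:ℝ) * lam n :=
        le_trans hrpow
          (mul_le_mul_of_nonneg_left (hlam_mono (by omega)) hjpos.le)
      have hrpos : (0:ℝ) < ((j.factorial : ℝ) * L j) ^ ((1 : ℝ) / j) :=
        Real.rpow_pos_of_pos hmulpos _
      rw [mul_one_div, div_le_div_iff₀ hjpos hrpos, one_mul]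
      calc ((j.factorial : ℝ) * L j) ^ ((1 : ℝ) / j) ≤ (j:ℝ) * lam n := hle2
        _ = lam n * j := by ring
    calc Real.log ((n:ℝ)+2) ≤ ∑ j ∈ Finset.Icc 1 (n+1), (1:ℝ)/j := aux3 n
      _ ≤ ∑ j ∈ Finset.Icc 1 (n+1),
            lam n * (1 / (((j.factorial : ℝ) * L j) ^ ((1 : ℝ) / j))) :=
          Finset.sum_le_sum hcomp
      _ = lam n * ∑ j ∈ Finset.Icc 1 (n+1),
            1 / (((j.factorial : ℝ) * L j) ^ ((1 : ℝ) / j)) := by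
          rw [Finset.mul_sum]
      _ ≤ lam n * S := by
          apply mul_le_mul_of_nonneg_left _ (hlam_pos n).le
          exact hsum.sum_le_tsum _ (fun i _ => hterm_nonneg i)
      _ = S * lam n := by ring
  have hSpos : 0 < S := by
    have h := hlamS 0
    have hlog : (0:ℝ) < Real.log (((0:ℕ):ℝ)+2) := by
      apply Real.log_pos; norm_num
    nlinarith [hlam_pos 0, h, hlog]
  set T : ℝ := max S 1 with hT_def
  have hT1 : (1:ℝ) ≤ T := le_max_right _ _
  have hTpos : (0:ℝ) < T := by linarith
  have hlamT : ∀ n : ℕ, Real.log ((n:ℝ)+2) ≤ T * lam n := fun n =>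
    le_trans (hlamS n)
      (mul_le_mul_of_nonneg_right (le_max_left _ _) (hlam_pos n).le)
  clear_value T
  clear_value S
  refine ⟨72 * T, by positivity, ?_⟩
  intro k
  rcases Nat.eq_zero_or_pos k with hk0 | hk1
  · subst hk0
    rw [hQ0, pow_zero, one_mul, hL0]
  · rw [hQ k hk1]
    obtain ⟨m, rfl⟩ : ∃ m, k = m + 1 := ⟨k - 1, by omega⟩
    have hG_def : True := trivial
    set G : ℝ := Real.log (((m+1:ℕ):ℝ) + Real.exp 1) with hGdef
    have hkR : (1:ℝ) ≤ ((m+1:ℕ):ℝ) := by exact_mod_cast hk1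
    have hbpos : (0:ℝ) < ((m+1:ℕ):ℝ) + Real.exp 1 := by
      have := Real.exp_pos 1; linarith
    have hG0 : 0 < G := Real.log_pos (by linarith)
    have hFpos : (0:ℝ) < ((m+1).factorial : ℝ) := by
      exact_mod_cast Nat.factorial_pos (m+1)
    rw [div_le_iff₀ hFpos]
    set b : ℝ := ((m+1:ℕ):ℝ) + Real.exp 1 with hb_def
    set P : ℝ := ∏ j ∈ Finset.Ico 1 (m+1), lam j with hP_def
    have hPpos : 0 < P := Finset.prod_pos (fun j _ => hlam_pos j)
    have hF2pos : (0:ℝ) < ((m+2).factorial : ℝ) := by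
      exact_mod_cast Nat.factorial_pos (m+2)
    clear_value G
    clear_value b
    -- Step 1 : per-factor estimate
    have h1 : (((m+1:ℕ):ℝ)*G)^(m+1) ≤ (((m+1:ℕ):ℝ)*G) *
        ∏ j ∈ Finset.Ico 1 (m+1), ((((m+1:ℕ):ℝ) * b * T / ((j:ℝ)+2)) * lam j) := by
      have hsplit : (((m+1:ℕ):ℝ)*G)^(m+1)
          = (((m+1:ℕ):ℝ)*G) * ∏ j ∈ Finset.Ico 1 (m+1), (((m+1:ℕ):ℝ)*G) := by
        rw [Finset.prod_const, Nat.card_Ico]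
        simp only [Nat.add_sub_cancel]
        ring
      rw [hsplit]
      apply mul_le_mul_of_nonneg_left _ (by positivity)
      apply Finset.prod_le_prod
      · intro j _; positivity
      · intro j hj
        rw [Finset.mem_Ico] at hj
        obtain ⟨hj1, hj2⟩ := hj
        have hjR : (1:ℝ) ≤ (j:ℝ) := by exact_mod_cast hj1
        have ha_pos : (0:ℝ) < (j:ℝ) + 2 := by linarith
        have hea : Real.exp 1 ≤ (j:ℝ) + 2 := by linarith
        have hab : (j:ℝ) + 2 ≤ b := by
          have hjk : (j:ℝ) + 1 ≤ ((m+1:ℕ):ℝ) := by exact_mod_cast hj2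
          rw [hb_def]; linarith
        have hanti := Real.log_div_self_antitoneOn
          (show (j:ℝ)+2 ∈ {x : ℝ | Real.exp 1 ≤ x} from hea)
          (show b ∈ {x : ℝ | Real.exp 1 ≤ x} from le_trans hea hab)
          hab
        have hkey : G * ((j:ℝ)+2) ≤ Real.log ((j:ℝ)+2) * b := by
          rw [div_le_div_iff₀ hbpos ha_pos] at hanti
          rw [hGdef]
          exact hanti
        have hloga : Real.log ((j:ℝ)+2) ≤ T * lam j := hlamT j
        rw [div_mul_eq_mul_div, le_div_iff₀ ha_pos]
        have h5 : Real.log ((j:ℝ)+2) * b ≤ (T * lam j) * b :=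
          mul_le_mul_of_nonneg_right hloga hbpos.le
        calc ((m+1:ℕ):ℝ) * G * ((j:ℝ)+2) = ((m+1:ℕ):ℝ) * (G * ((j:ℝ)+2)) := by ring
          _ ≤ ((m+1:ℕ):ℝ) * ((T * lam j) * b) :=
              mul_le_mul_of_nonneg_left (le_trans hkey h5) (by positivity)
          _ = ((m+1:ℕ):ℝ) * b * T * lam j := by ring
    -- Step 2 : compute the product
    have h2 : ∏ j ∈ Finset.Ico 1 (m+1), ((((m+1:ℕ):ℝ) * b * T / ((j:ℝ)+2)) * lam j)
        = (((m+1:ℕ):ℝ)*b*T)^m * (2/((m+2).factorial:ℝ)) * P := by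
      rw [Finset.prod_mul_distrib, Finset.prod_div_distrib, Finset.prod_const,
        Nat.card_Ico, aux2 m]
      simp only [Nat.add_sub_cancel]
      rw [div_div_eq_mul_div]
      ring
    clear_value P
    -- Step 3 : numeric bound
    have h3 : 2*((m+1:ℕ):ℝ)*G*((((m+1:ℕ):ℝ)*b*T)^m)
        ≤ (72*T)^(m+1) * ((m+1).factorial:ℝ) * ((m+2).factorial:ℝ) := by
      set K : ℝ := ((m+1:ℕ):ℝ) with hK_def
      clear_value K
      have hGb : G ≤ b := by
        have h := Real.log_le_sub_one_of_pos hbpos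
        rw [hGdef]
        linarith
      have hK1 : (1:ℝ) ≤ K := hkR
      have hb4 : b ≤ 4*K := by
        rw [hb_def]
        linarith
      have hG4 : G ≤ 4*K := le_trans hGb hb4
      have hKpos : (0:ℝ) < K := by linarith
      have step1 : 2*K*G*((K*b*T)^m) ≤ 2*K*(4*K)*((K*(4*K)*T)^m) := by
        have hKb : (0:ℝ) ≤ K*b := mul_nonneg hKpos.le hbpos.le
        have hinner : K*b*T ≤ K*(4*K)*T :=
          mul_le_mul_of_nonneg_right (mul_le_mul_of_nonneg_left hb4 hKpos.le) hTpos.le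
        have hpow : (K*b*T)^m ≤ (K*(4*K)*T)^m :=
          pow_le_pow_left₀ (mul_nonneg hKb hTpos.le) hinner m
        have h2K : (0:ℝ) ≤ 2*K := by linarith
        have h4K : (0:ℝ) ≤ 4*K := by linarith
        have houter : 2*K*G ≤ 2*K*(4*K) := by
          calc 2*K*G = (2*K)*G := by ring
            _ ≤ (2*K)*(4*K) := mul_le_mul_of_nonneg_left hG4 h2K
            _ = 2*K*(4*K) := by ring
        exact mul_le_mul houter hpow (pow_nonneg (mul_nonneg hKb hTpos.le) m)
          (mul_nonneg h2K h4K)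
      have step2 : 2*K*(4*K)*((K*(4*K)*T)^m)
          = 2*(4:ℝ)^(m+1)*((K^(m+1))^2)*T^m := by ring
      have step3 : (K^(m+1))^2 ≤ ((Real.exp 1)^(m+1) * ((m+1).factorial:ℝ))^2 := by
        apply pow_le_pow_left₀ (pow_nonneg hKpos.le _)
        rw [hK_def]
        exact aux1 (m+1)
      have he9 : (Real.exp 1)^2 ≤ 9 := by nlinarith [Real.exp_pos 1]
      have hFF : ((m+1).factorial:ℝ) ≤ ((m+2).factorial:ℝ) := by
        exact_mod_cast Nat.factorial_le (by omega)
      have step4 : 2*(4:ℝ)^(m+1)*(((Real.exp 1)^(m+1) * ((m+1).factorial:ℝ))^2)*T^m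
          ≤ (72*T)^(m+1) * ((m+1).factorial:ℝ) * ((m+2).factorial:ℝ) := by
        have hexp : ((Real.exp 1)^(m+1))^2 = ((Real.exp 1)^2)^(m+1) := by
          rw [← pow_mul, ← pow_mul, Nat.mul_comm]
        have h9 : ((Real.exp 1)^2)^(m+1) ≤ (9:ℝ)^(m+1) :=
          pow_le_pow_left₀ (by positivity) he9 (m+1)
        have h2le : (2:ℝ) ≤ 2^(m+1) := by
          calc (2:ℝ) = 2^1 := by norm_num
            _ ≤ 2^(m+1) := pow_le_pow_right₀ (by norm_num) (by omega)
        have hTm : T^m ≤ T^(m+1) := pow_le_pow_right₀ hT1 (by omega)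
        have hTmn : (0:ℝ) ≤ T^m := pow_nonneg hTpos.le m
        have hsq : ((m+1).factorial:ℝ)^2 ≤ ((m+1).factorial:ℝ)*((m+2).factorial:ℝ) := by
          nlinarith [hFpos, hFF]
        have h72 : (72:ℝ)^(m+1) = 2^(m+1)*4^(m+1)*9^(m+1) := by
          rw [← mul_pow, ← mul_pow]; norm_num
        have t1 : 2*(4:ℝ)^(m+1)*(((Real.exp 1)^2)^(m+1))
            ≤ (2:ℝ)^(m+1)*4^(m+1)*9^(m+1) := by
          have A : (2:ℝ)*(4:ℝ)^(m+1) ≤ (2:ℝ)^(m+1)*(4:ℝ)^(m+1) :=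
            mul_le_mul_of_nonneg_right h2le (by positivity)
          calc 2*(4:ℝ)^(m+1)*(((Real.exp 1)^2)^(m+1))
              ≤ ((2:ℝ)^(m+1)*(4:ℝ)^(m+1))*(((Real.exp 1)^2)^(m+1)) :=
                mul_le_mul_of_nonneg_right A (by positivity)
            _ ≤ ((2:ℝ)^(m+1)*(4:ℝ)^(m+1))*(9:ℝ)^(m+1) :=
                mul_le_mul_of_nonneg_left h9 (by positivity)
        have t2 : ((m+1).factorial:ℝ)^2 * T^m
            ≤ (((m+1).factorial:ℝ)*((m+2).factorial:ℝ)) * T^(m+1) :=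
          mul_le_mul hsq hTm hTmn (mul_nonneg hFpos.le hF2pos.le)
        calc 2*(4:ℝ)^(m+1)*(((Real.exp 1)^(m+1) * ((m+1).factorial:ℝ))^2)*T^m
            = (2*(4:ℝ)^(m+1)*(((Real.exp 1)^2)^(m+1))) * (((m+1).factorial:ℝ)^2 * T^m) := by
              rw [← hexp]; ring
          _ ≤ ((2:ℝ)^(m+1)*4^(m+1)*9^(m+1)) * ((((m+1).factorial:ℝ)*((m+2).factorial:ℝ)) * T^(m+1)) :=
              mul_le_mul t1 t2 (mul_nonneg (by positivity) hTmn) (by positivity)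
          _ = (72*T)^(m+1) * ((m+1).factorial:ℝ) * ((m+2).factorial:ℝ) := by
              rw [mul_pow, h72]; ring
      calc 2*K*G*((K*b*T)^m) ≤ 2*K*(4*K)*((K*(4*K)*T)^m) := step1
        _ = 2*(4:ℝ)^(m+1)*((K^(m+1))^2)*T^m := step2
        _ ≤ 2*(4:ℝ)^(m+1)*(((Real.exp 1)^(m+1) * ((m+1).factorial:ℝ))^2)*T^m := by
            apply mul_le_mul_of_nonneg_right _ (pow_nonneg hTpos.le m)
            apply mul_le_mul_of_nonneg_left step3 (by positivity)
        _ ≤ (72*T)^(m+1) * ((m+1).factorial:ℝ) * ((m+2).factorial:ℝ) := step4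
    -- Step 4 : P ≤ L (m+1)
    have hPL : P ≤ L (m+1) := by
      rw [hLprod (m+1), Finset.range_eq_Ico,
        Finset.prod_eq_prod_Ico_succ_bot (by omega) lam]
      rw [hP_def]
      nlinarith [hlam_one 0, hPpos]
    -- Assemble
    calc (((m+1:ℕ):ℝ)*G)^(m+1)
        ≤ (((m+1:ℕ):ℝ)*G) *
          ∏ j ∈ Finset.Ico 1 (m+1), ((((m+1:ℕ):ℝ) * b * T / ((j:ℝ)+2)) * lam j) := h1
      _ = (2*((m+1:ℕ):ℝ)*G*((((m+1:ℕ):ℝ)*b*T)^m)) * P / ((m+2).factorial:ℝ) := by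
          rw [h2]; ring
      _ ≤ ((72*T)^(m+1) * ((m+1).factorial:ℝ) * ((m+2).factorial:ℝ)) * P
            / ((m+2).factorial:ℝ) := by
          rw [div_le_div_iff_of_pos_right hF2pos]
          exact mul_le_mul_of_nonneg_right h3 hPpos.le
      _ = (72*T)^(m+1) * ((m+1).factorial:ℝ) * P := by
          rw [div_eq_iff hF2pos.ne']
          ring
      _ ≤ (72*T)^(m+1) * ((m+1).factorial:ℝ) * L (m+1) := by
          apply mul_le_mul_of_nonneg_left hPL
            (mul_nonneg (pow_nonneg (mul_nonneg (by norm_num) hTpos.le) _) hFpos.le)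
      _ = (72*T)^(m+1) * L (m+1) * ((m+1).factorial:ℝ) := by ring
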